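/- Fix an integer d ≥ 3, let C₁ = {0, 1}, C₂ = {−d, −d+1, …, −2} ∪ {1, 2, …, d−1}, let n be an even positive integer, and let c ∈ [±d]^n. Define 𝓛 = {a ∈ ℤ^n : a_i ∈ C₁ for 1 ≤ i ≤ n/2 and a_i ∈ C₂ for n/2 < i ≤ n} and 𝓡 = {b ∈ ℤ^n : b_i ∈ C₂ for 1 ≤ i ≤ n/2 and b_i ∈ C₁ for n/2 < i ≤ n}. Then the number of pairs (a, b) ∈ 𝓛 × 𝓡 with a + b = c equals 2^m, where m = #{i ∈ [n] : 2 ≤ |c_i| ≤ d − 1}. -/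
import Mathlib


lemma card_filter01 (d c0 : ℤ) (hd : 3 ≤ d) (h1 : -d ≤ c0) (h2 : c0 ≤ d) (h0 : c0 ≠ 0) :
    ((({0,1} : Finset ℤ) ×ˢ (Finset.Icc (-d) (-2) ∪ Finset.Icc 1 (d-1))).filter
      (fun q => q.1 + q.2 = c0)).card =
    if 2 ≤ |c0| ∧ |c0| ≤ d - 1 then 2 else 1 := by
  classical
  set C2 : Finset ℤ := Finset.Icc (-d) (-2) ∪ Finset.Icc 1 (d-1) with hC2
  have himg : (((({0,1} : Finset ℤ)) ×ˢ C2).filter (fun q => q.1 + q.2 = c0)) =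
      ((({0,1} : Finset ℤ)).filter (fun x => c0 - x ∈ C2)).image (fun x => (x, c0 - x)) := by
    ext ⟨x, y⟩
    simp only [Finset.mem_filter, Finset.mem_product, Finset.mem_image, Prod.mk.injEq]
    constructor
    · rintro ⟨⟨hx, hy⟩, hxy⟩
      exact ⟨x, ⟨hx, by rw [show c0 - x = y by omega]; exact hy⟩, rfl, by omega⟩
    · rintro ⟨a, ⟨ha, ha2⟩, rfl, rfl⟩
      exact ⟨⟨ha, ha2⟩, by ring⟩
  rw [himg, Finset.card_image_of_injective _ (fun a b h => (Prod.mk.injEq _ _ _ _ ▸ h).1)]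
  have : ({0,1} : Finset ℤ) = insert 0 {1} := rfl
  rw [this, Finset.filter_insert, Finset.filter_singleton]
  have hm : ∀ z : ℤ, z ∈ C2 ↔ (-d ≤ z ∧ z ≤ -2) ∨ (1 ≤ z ∧ z ≤ d - 1) := by
    intro z; simp [hC2, Finset.mem_union, Finset.mem_Icc]
  have habs : |c0| = (c0.natAbs : ℤ) := Int.abs_eq_natAbs c0
  rw [habs]
  simp only [hm, sub_zero]
  split_ifs <;> first | (exfalso; omega) | simp

lemma card_filter10 (d c0 : ℤ) (hd : 3 ≤ d) (h1 : -d ≤ c0) (h2 : c0 ≤ d) (h0 : c0 ≠ 0) :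
    (((Finset.Icc (-d) (-2) ∪ Finset.Icc 1 (d-1)) ×ˢ ({0,1} : Finset ℤ)).filter
      (fun q => q.1 + q.2 = c0)).card =
    if 2 ≤ |c0| ∧ |c0| ≤ d - 1 then 2 else 1 := by
  classical
  rw [← card_filter01 d c0 hd h1 h2 h0]
  have : (((Finset.Icc (-d) (-2) ∪ Finset.Icc 1 (d-1)) ×ˢ ({0,1} : Finset ℤ)).filter
      (fun q => q.1 + q.2 = c0)) =
      ((({0,1} : Finset ℤ) ×ˢ (Finset.Icc (-d) (-2) ∪ Finset.Icc 1 (d-1))).filter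
      (fun q => q.1 + q.2 = c0)).image Prod.swap := by
    ext ⟨x, y⟩
    simp only [Finset.mem_filter, Finset.mem_product, Finset.mem_image, Prod.exists,
      Prod.swap_prod_mk, Prod.mk.injEq]
    constructor
    · rintro ⟨⟨hx, hy⟩, hxy⟩
      exact ⟨y, x, ⟨⟨hy, hx⟩, by omega⟩, rfl, rfl⟩
    · rintro ⟨a, b, ⟨⟨ha, hb⟩, hab⟩, rfl, rfl⟩
      exact ⟨⟨hb, ha⟩, by omega⟩
  rw [this, Finset.card_image_of_injective _ Prod.swap_injective]


/-- Number of coefficient-shifted solution pairs for C = [±d], d ≥ 3, with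
factors C₁ = {0,1} and C₂ = {−d,…,−2} ∪ {1,…,d−1}: the number of pairs
(a, b) ∈ 𝓛 × 𝓡 with a + b = c equals 2^m, where m = #{i : 2 ≤ |c_i| ≤ d−1}. -/
theorem stmt_5 (d : ℤ) (hd : 3 ≤ d) (n : ℕ) (hn : 0 < n) (hneven : Even n)
    (c : Fin n → ℤ) (hc : ∀ i, c i ∈ Finset.Icc (-d) d \ {0}) :
    Set.ncard {p : (Fin n → ℤ) × (Fin n → ℤ) |
        (∀ i : Fin n, ((i : ℕ) < n / 2 → p.1 i ∈ ({0, 1} : Finset ℤ)) ∧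
          (n / 2 ≤ (i : ℕ) → p.1 i ∈ Finset.Icc (-d) (-2) ∪ Finset.Icc 1 (d - 1))) ∧
        (∀ i : Fin n, ((i : ℕ) < n / 2 → p.2 i ∈ Finset.Icc (-d) (-2) ∪ Finset.Icc 1 (d - 1)) ∧
          (n / 2 ≤ (i : ℕ) → p.2 i ∈ ({0, 1} : Finset ℤ))) ∧
        p.1 + p.2 = c} =
      2 ^ (Finset.univ.filter fun i => 2 ≤ |c i| ∧ |c i| ≤ d - 1).card := by
    classical
  set C2 : Finset ℤ := Finset.Icc (-d) (-2) ∪ Finset.Icc 1 (d-1) with hC2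
  set S : Fin n → Finset (ℤ × ℤ) := fun i =>
    if (i : ℕ) < n / 2 then ((({0,1} : Finset ℤ) ×ˢ C2).filter (fun q => q.1 + q.2 = c i))
    else ((C2 ×ˢ ({0,1} : Finset ℤ)).filter (fun q => q.1 + q.2 = c i)) with hS
  have hset : {p : (Fin n → ℤ) × (Fin n → ℤ) |
        (∀ i : Fin n, ((i : ℕ) < n / 2 → p.1 i ∈ ({0, 1} : Finset ℤ)) ∧
          (n / 2 ≤ (i : ℕ) → p.1 i ∈ Finset.Icc (-d) (-2) ∪ Finset.Icc 1 (d - 1))) ∧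
        (∀ i : Fin n, ((i : ℕ) < n / 2 → p.2 i ∈ Finset.Icc (-d) (-2) ∪ Finset.Icc 1 (d - 1)) ∧
          (n / 2 ≤ (i : ℕ) → p.2 i ∈ ({0, 1} : Finset ℤ))) ∧
        p.1 + p.2 = c}
      = {p : (Fin n → ℤ) × (Fin n → ℤ) | ∀ i, (p.1 i, p.2 i) ∈ S i} := by
    ext p
    simp only [Set.mem_setOf_eq, hS]
    constructor
    · rintro ⟨h1, h2, h3⟩ i
      have h3i : p.1 i + p.2 i = c i := congrFun h3 i
      by_cases hi : (i : ℕ) < n / 2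
      · simp only [if_pos hi, Finset.mem_filter, Finset.mem_product]
        exact ⟨⟨(h1 i).1 hi, (h2 i).1 hi⟩, h3i⟩
      · simp only [if_neg hi, Finset.mem_filter, Finset.mem_product]
        exact ⟨⟨(h1 i).2 (le_of_not_gt hi), (h2 i).2 (le_of_not_gt hi)⟩, h3i⟩
    · intro h
      have key : ∀ i : Fin n,
          (((i : ℕ) < n / 2 → p.1 i ∈ ({0, 1} : Finset ℤ)) ∧
            (n / 2 ≤ (i : ℕ) → p.1 i ∈ C2)) ∧
          (((i : ℕ) < n / 2 → p.2 i ∈ C2) ∧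
            (n / 2 ≤ (i : ℕ) → p.2 i ∈ ({0, 1} : Finset ℤ))) ∧
          p.1 i + p.2 i = c i := by
        intro i
        have hi := h i
        by_cases hlt : (i : ℕ) < n / 2
        · rw [if_pos hlt, Finset.mem_filter, Finset.mem_product] at hi
          exact ⟨⟨fun _ => hi.1.1, fun hle => absurd hlt (not_lt.mpr hle)⟩,
            ⟨fun _ => hi.1.2, fun hle => absurd hlt (not_lt.mpr hle)⟩, hi.2⟩
        · rw [if_neg hlt, Finset.mem_filter, Finset.mem_product] at hi
          exact ⟨⟨fun hl => absurd hl hlt, fun _ => hi.1.1⟩,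
            ⟨fun hl => absurd hl hlt, fun _ => hi.1.2⟩, hi.2⟩
      exact ⟨fun i => (key i).1, fun i => (key i).2.1,
        funext fun i => (key i).2.2⟩
  rw [hset]
  have e : {p : (Fin n → ℤ) × (Fin n → ℤ) | ∀ i, (p.1 i, p.2 i) ∈ S i} ≃
      (∀ i, {q : ℤ × ℤ // q ∈ S i}) :=
    { toFun := fun p => fun i => ⟨(p.1.1 i, p.1.2 i), p.2 i⟩
      invFun := fun q => ⟨(fun i => (q i).1.1, fun i => (q i).1.2), fun i => by
        simpa using (q i).2⟩
      left_inv := fun p => rfl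
      right_inv := fun q => rfl }
  have hcard : Set.ncard {p : (Fin n → ℤ) × (Fin n → ℤ) | ∀ i, (p.1 i, p.2 i) ∈ S i}
      = ∏ i, (S i).card := by
    rw [← Nat.card_coe_set_eq, Nat.card_congr e, Nat.card_pi]
    exact Finset.prod_congr rfl fun i _ => Nat.card_eq_finsetCard (S i)
  rw [hcard]
  have hSi : ∀ i, (S i).card = if 2 ≤ |c i| ∧ |c i| ≤ d - 1 then 2 else 1 := by
    intro i
    have hci := hc i
    simp only [Finset.mem_sdiff, Finset.mem_Icc, Finset.mem_singleton] at hci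
    by_cases hlt : (i : ℕ) < n / 2
    · rw [hS]; simp only [if_pos hlt]
      exact card_filter01 d (c i) hd hci.1.1 hci.1.2 hci.2
    · rw [hS]; simp only [if_neg hlt]
      exact card_filter10 d (c i) hd hci.1.1 hci.1.2 hci.2
  simp only [hSi]
  rw [Finset.prod_ite, Finset.prod_const, Finset.prod_const, one_pow, mul_one]
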